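/- For all real a > 0, b > 0 and γ > 0, ∫₀^∞ (λᵃ·γ^{a−1}·e^{−λγ}/Γ(a)) · (λ^{b−1}·e^{−λ}/Γ(b)) dλ = (Γ(a+b)/(Γ(a)·Γ(b))) · γ^{a−1}/(1+γ)^{a+b}. -/

import Mathlib

open MeasureTheory Real

/-- The Beta prime distribution is a scale mixture of two Gamma distributions:
integrating the product of the `Gamma(a, λ)` density at `γ` and the `Gamma(b, 1)`
density at `λ` over `λ ∈ (0,∞)` yields the Beta prime density `B′(γ|a,b)`. -/
theorem gamma_mixture_eq_betaPrime (a b γ : ℝ) (ha : 0 < a) (hb : 0 < b) (hγ : 0 < γ) :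
    ∫ l in Set.Ioi (0:ℝ),
        (l ^ a * γ ^ (a - 1) * Real.exp (-(l * γ)) / Real.Gamma a) *
          (l ^ (b - 1) * Real.exp (-l) / Real.Gamma b) =
      (Real.Gamma (a + b) / (Real.Gamma a * Real.Gamma b)) *
        γ ^ (a - 1) / (1 + γ) ^ (a + b) := by
  have h1γ : (0:ℝ) < 1 + γ := by linarith
  have key := Real.integral_rpow_mul_exp_neg_mul_Ioi (show (0:ℝ) < a + b by linarith) h1γ
  have hcongr : ∫ l in Set.Ioi (0:ℝ),
      (l ^ a * γ ^ (a - 1) * Real.exp (-(l * γ)) / Real.Gamma a) *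
        (l ^ (b - 1) * Real.exp (-l) / Real.Gamma b)
      = ∫ l in Set.Ioi (0:ℝ),
        (γ ^ (a - 1) / (Real.Gamma a * Real.Gamma b)) *
          (l ^ (a + b - 1) * Real.exp (-((1 + γ) * l))) := by
    refine setIntegral_congr_fun measurableSet_Ioi (fun l hl => ?_)
    have hl0 : (0:ℝ) < l := hl
    have hpow : l ^ a * l ^ (b - 1) = l ^ (a + b - 1) := by
      rw [← Real.rpow_add hl0]; ring_nf
    have hexp : Real.exp (-(l * γ)) * Real.exp (-l) = Real.exp (-((1 + γ) * l)) := by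
      rw [← Real.exp_add]; ring_nf
    field_simp
    calc l ^ a * Real.exp (-(l * γ)) * l ^ (b - 1) * Real.exp (-l)
        = (l ^ a * l ^ (b - 1)) * (Real.exp (-(l * γ)) * Real.exp (-l)) := by ring
      _ = l ^ (a + b - 1) * Real.exp (-(l * (1 + γ))) := by rw [hpow, hexp, mul_comm (1 + γ) l]
  rw [hcongr, integral_const_mul, key]
  rw [Real.div_rpow (by norm_num) h1γ.le, Real.one_rpow]
  field_simp
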